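/- Let R be a local integral domain and let f_1, …, f_r ∈ R be elements such that the ideal ⟨f_i, f_j⟩ is principal for all i, j ∈ {1, …, r}. Then the ideal ⟨f_1, …, f_r⟩ is principal; more precisely, there is an index k ∈ {1, …, r} such that ⟨f_1, …, f_r⟩ = ⟨f_k⟩. -/

import Mathlib

lemma dvd_or_dvd_of_principal {R : Type*} [CommRing R] [IsDomain R] [IsLocalRing R]
    (a b : R) (h : (Ideal.span {a, b}).IsPrincipal) : a ∣ b ∨ b ∣ a := by
  obtain ⟨d, hd⟩ := h
  have ha : a ∈ Ideal.span {a, b} := Ideal.subset_span (by simp)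
  have hb : b ∈ Ideal.span {a, b} := Ideal.subset_span (by simp)
  rw [hd, Ideal.submodule_span_eq, Ideal.mem_span_singleton] at ha hb
  obtain ⟨x, hx⟩ := ha
  obtain ⟨y, hy⟩ := hb
  have hdm : d ∈ Ideal.span {a, b} := by rw [hd]; exact Ideal.subset_span rfl
  rw [Ideal.mem_span_pair] at hdm
  obtain ⟨u, v, huv⟩ := hdm
  rcases eq_or_ne d 0 with h0 | h0
  · left; rw [hx, hy, h0]; simp
  · have : u * x + v * y = 1 := by
      have : d * (u * x + v * y) = d * 1 := by rw [hx, hy] at huv; linear_combination huv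
      exact mul_left_cancel₀ h0 this
    rcases IsLocalRing.isUnit_or_isUnit_of_add_one this with hu | hv
    · left
      have hxu : IsUnit x := isUnit_of_mul_isUnit_right hu
      have : a ∣ d := by
        obtain ⟨xu, hxu'⟩ := hxu
        exact ⟨↑xu⁻¹, by rw [hx, ← hxu', mul_assoc, Units.mul_inv, mul_one]⟩
      exact this.trans ⟨y, hy⟩
    · right
      have hyu : IsUnit y := isUnit_of_mul_isUnit_right hv
      have : b ∣ d := by
        obtain ⟨yu, hyu'⟩ := hyu
        exact ⟨↑yu⁻¹, by rw [hy, ← hyu', mul_assoc, Units.mul_inv, mul_one]⟩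
      exact this.trans ⟨x, hx⟩

lemma exists_dvd_min {ι R : Type*} [CommMonoid R] (f : ι → R)
    (htot : ∀ i j, f i ∣ f j ∨ f j ∣ f i) (s : Finset ι) (hs : s.Nonempty) :
    ∃ k ∈ s, ∀ j ∈ s, f k ∣ f j := by
  induction hs using Finset.Nonempty.cons_induction with
  | singleton a => exact ⟨a, by simp⟩
  | cons a s ha hs ih =>
    obtain ⟨k, hk, hkd⟩ := ih
    rcases htot a k with h | h
    · exact ⟨a, Finset.mem_cons_self a s, fun j hj => by
        rcases Finset.mem_cons.mp hj with rfl | hj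
        · exact dvd_rfl
        · exact h.trans (hkd j hj)⟩
    · exact ⟨k, Finset.mem_cons_of_mem hk, fun j hj => by
        rcases Finset.mem_cons.mp hj with rfl | hj
        · exact h
        · exact hkd j hj⟩

theorem stmt2 {R : Type*} [CommRing R] [IsDomain R] [IsLocalRing R]
    {r : ℕ} (hr : 0 < r) (f : Fin r → R)
    (hpr : ∀ i j : Fin r, (Ideal.span {f i, f j}).IsPrincipal) :
    (Ideal.span (Set.range f)).IsPrincipal ∧
      ∃ k : Fin r, Ideal.span (Set.range f) = Ideal.span {f k} := by
  have htot : ∀ i j, f i ∣ f j ∨ f j ∣ f i := fun i j =>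
    dvd_or_dvd_of_principal (f i) (f j) (hpr i j)
  have : Nonempty (Fin r) := ⟨⟨0, hr⟩⟩
  obtain ⟨k, -, hk⟩ := exists_dvd_min f htot Finset.univ Finset.univ_nonempty
  have heq : Ideal.span (Set.range f) = Ideal.span {f k} := by
    apply le_antisymm
    · rw [Ideal.span_le]
      rintro x ⟨j, rfl⟩
      exact Ideal.mem_span_singleton.mpr (hk j (Finset.mem_univ j))
    · rw [Ideal.span_le]
      rintro x rfl
      exact Ideal.subset_span ⟨k, rfl⟩
  exact ⟨heq ▸ ⟨f k, by simp [Ideal.submodule_span_eq]⟩, k, heq⟩
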